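/- For every n ≥ 3, the number of permutations σ ∈ S_n with mmp^{(2≤max,∅,0,0)}(σ) = 1 equals c(n,3), the number of permutations in S_n with exactly 3 cycles; that is, the coefficient of x in R_n^{(2≤max,∅,0,0)}(x) is c(n,3). -/

import Mathlib

/-- `σ i` matches `MMP(k ≤ max, ∅, 0, 0)` in `σ`: none of the earlier entries
exceeds `σ i`, and, `σ m` being the maximum of the entries after position `i`,
at least `k` of the entries in positions `i+1, …, m` exceed `σ i`. -/
def kleMatch {n : ℕ} (k : ℕ) (σ : Equiv.Perm (Fin n)) (i : Fin n) : Prop :=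
  (∀ j, j < i → σ j < σ i) ∧
  ∃ m, i < m ∧ (∀ j, i < j → σ j ≤ σ m) ∧
    k ≤ (Finset.univ.filter (fun j => i < j ∧ j ≤ m ∧ σ i < σ j)).card

instance {n : ℕ} (k : ℕ) (σ : Equiv.Perm (Fin n)) (i : Fin n) :
    Decidable (kleMatch k σ i) := by
  unfold kleMatch; infer_instance

/-- `mmp^{(k ≤ max, ∅, 0, 0)}(σ)`. -/
def mmpKle {n : ℕ} (k : ℕ) (σ : Equiv.Perm (Fin n)) : ℕ :=
  (Finset.univ.filter (fun i => kleMatch k σ i)).card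

/-- `R_n^{(k ≤ max, ∅, 0, 0)}(x) = Σ_{σ ∈ S_n} x^{mmp^{(k ≤ max,∅,0,0)}(σ)}`. -/
noncomputable def RKle (k n : ℕ) : Polynomial ℤ :=
  ∑ σ : Equiv.Perm (Fin n), Polynomial.X ^ mmpKle k σ

/-- The number of cycles of `σ` (fixed points count as cycles). -/
def numCycles {n : ℕ} (σ : Equiv.Perm (Fin n)) : ℕ :=
  Multiset.card σ.cycleType + (Finset.univ.filter (fun x => σ x = x)).card


open Equiv Finset

/-- left-to-right maxima positions of σ (as a word). -/
def lrSet {n : ℕ} (σ : Equiv.Perm (Fin n)) : Finset (Fin n) :=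
  Finset.univ.filter (fun i => ∀ j, j < i → σ j < σ i)

/-- counting lemma: elements of `S` having at least `k` elements of `S` above them. -/
lemma card_filter_le_above {n : ℕ} (k : ℕ) (S : Finset (Fin n)) :
    (S.filter (fun i => k ≤ (S.filter (fun j => i < j)).card)).card = S.card - k := by
  induction k generalizing S with
  | zero => simp
  | succ k ih =>
    rcases S.eq_empty_or_nonempty with rfl | hS
    · simp
    · set M := S.max' hS with hM
      have hMS : M ∈ S := S.max'_mem hS
      have key : ∀ i ∈ S, i ≠ M →
          S.filter (fun j => i < j) = insert M ((S.erase M).filter (fun j => i < j)) := by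
        intro i hi hne
        ext z
        simp only [mem_filter, mem_insert, mem_erase]
        constructor
        · rintro ⟨hz, hiz⟩
          by_cases hzM : z = M
          · exact Or.inl hzM
          · exact Or.inr ⟨⟨hzM, hz⟩, hiz⟩
        · rintro (rfl | ⟨⟨hzM, hz⟩, hiz⟩)
          · exact ⟨hMS, lt_of_le_of_ne (S.le_max' i hi) hne⟩
          · exact ⟨hz, hiz⟩
      have hfilt : S.filter (fun i => k + 1 ≤ (S.filter (fun j => i < j)).card)
          = (S.erase M).filter
              (fun i => k ≤ ((S.erase M).filter (fun j => i < j)).card) := by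
        ext i
        simp only [mem_filter, mem_erase]
        constructor
        · rintro ⟨hi, hc⟩
          have hne : i ≠ M := by
            rintro rfl
            obtain ⟨j, hj⟩ := Finset.card_pos.mp (lt_of_lt_of_le (Nat.succ_pos k) hc)
            simp only [mem_filter] at hj
            exact absurd (S.le_max' j hj.1) (not_le.mpr hj.2)
          rw [key i hi hne] at hc
          rw [Finset.card_insert_of_notMem (by simp)] at hc
          exact ⟨⟨hne, hi⟩, Nat.lt_succ_iff.mp (Nat.lt_of_lt_of_le (Nat.lt_succ_self _) hc)⟩
        · rintro ⟨⟨hne, hi⟩, hc⟩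
          refine ⟨hi, ?_⟩
          rw [key i hi hne, Finset.card_insert_of_notMem (by simp)]
          omega
      rw [hfilt, ih, Finset.card_erase_of_mem hMS]
      omega

lemma kleMatch_iff {n : ℕ} (σ : Equiv.Perm (Fin n)) (i : Fin n) :
    kleMatch 2 σ i ↔ i ∈ lrSet σ ∧ 2 ≤ ((lrSet σ).filter (fun j => i < j)).card := by
  constructor
  · rintro ⟨hlr, m, him, hmax, hcard⟩
    have hilr : i ∈ lrSet σ := by
      simp only [lrSet, mem_filter, mem_univ, true_and]; exact hlr
    refine ⟨hilr, ?_⟩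
    set F := Finset.univ.filter (fun j => i < j ∧ j ≤ m ∧ σ i < σ j) with hF
    -- m ∈ F
    have hm : m ∈ F := by
      obtain ⟨j, hj⟩ := Finset.card_pos.mp (lt_of_lt_of_le (by norm_num) hcard)
      simp only [hF, mem_filter, mem_univ, true_and] at hj ⊢
      exact ⟨him, le_refl m, lt_of_lt_of_le hj.2.2 (hmax j hj.1)⟩
    have hmlt : σ i < σ m := by
      simp only [hF, mem_filter] at hm; exact hm.2.2.2
    have hmlr : m ∈ lrSet σ := by
      simp only [lrSet, mem_filter, mem_univ, true_and]
      intro j' hj'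
      rcases lt_trichotomy j' i with h | rfl | h
      · exact lt_trans (hlr j' h) hmlt
      · exact hmlt
      · exact lt_of_le_of_ne (hmax j' h) (fun he => (ne_of_lt hj') (σ.injective he))
    -- second element
    have h2 : (F.erase m).Nonempty := by
      rw [← Finset.card_pos, Finset.card_erase_of_mem hm]; omega
    obtain ⟨w, hw⟩ := h2
    have hwF : w ∈ F := Finset.mem_of_mem_erase hw
    have hwne : w ≠ m := Finset.ne_of_mem_erase hw
    simp only [hF, mem_filter, mem_univ, true_and] at hwF
    have hwm : w < m := lt_of_le_of_ne hwF.2.1 hwne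
    have hIoo : w ∈ Finset.Ioo i m := Finset.mem_Ioo.mpr ⟨hwF.1, hwm⟩
    obtain ⟨j₁, hj₁I, hj₁max⟩ := Finset.exists_max_image (Finset.Ioo i m) σ ⟨w, hIoo⟩
    rw [Finset.mem_Ioo] at hj₁I
    have hj₁σ : σ i < σ j₁ := lt_of_lt_of_le hwF.2.2 (hj₁max w hIoo)
    have hj₁lr : j₁ ∈ lrSet σ := by
      simp only [lrSet, mem_filter, mem_univ, true_and]
      intro j' hj'
      rcases lt_trichotomy j' i with h | rfl | h
      · exact lt_trans (hlr j' h) hj₁σ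
      · exact hj₁σ
      · have : j' ∈ Finset.Ioo i m := Finset.mem_Ioo.mpr ⟨h, lt_trans hj' hj₁I.2⟩
        exact lt_of_le_of_ne (hj₁max j' this) (fun he => (ne_of_lt hj') (σ.injective he))
    have hsub : insert j₁ {m} ⊆ (lrSet σ).filter (fun j => i < j) := by
      intro z hz
      simp only [Finset.mem_insert, Finset.mem_singleton] at hz
      rcases hz with rfl | rfl
      · exact Finset.mem_filter.mpr ⟨hj₁lr, hj₁I.1⟩
      · exact Finset.mem_filter.mpr ⟨hmlr, him⟩
    calc 2 = (insert j₁ ({m} : Finset (Fin n))).card := by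
              rw [Finset.card_insert_of_notMem (by simp [ne_of_lt hj₁I.2])]; simp
      _ ≤ _ := Finset.card_le_card hsub
  · rintro ⟨hilr, hc⟩
    have hlr : ∀ j, j < i → σ j < σ i := by
      simp only [lrSet, mem_filter, mem_univ, true_and] at hilr; exact hilr
    refine ⟨hlr, ?_⟩
    obtain ⟨j₁, hj₁, j₂, hj₂, hne⟩ := Finset.one_lt_card.mp (by omega : 1 < ((lrSet σ).filter (fun j => i < j)).card)
    simp only [mem_filter] at hj₁ hj₂
    have hT : (Finset.univ.filter (fun j => i < j)).Nonempty :=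
      ⟨j₁, by simp [hj₁.2]⟩
    obtain ⟨m, hmT, hmmax⟩ := Finset.exists_max_image _ σ hT
    simp only [mem_filter, mem_univ, true_and] at hmT
    have hmax : ∀ j, i < j → σ j ≤ σ m := fun j hj => hmmax j (by simp [hj])
    have hlrle : ∀ z, z ∈ lrSet σ → i < z → z ≤ m := by
      intro z hz hiz
      by_contra h
      push_neg at h
      simp only [lrSet, mem_filter, mem_univ, true_and] at hz
      exact absurd (hz m h) (not_lt.mpr (hmax z hiz))
    have hj₁m : j₁ ≤ m := hlrle j₁ hj₁.1 hj₁.2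
    have hj₂m : j₂ ≤ m := hlrle j₂ hj₂.1 hj₂.2
    have hval : ∀ z, z ∈ lrSet σ → i < z → σ i < σ z := by
      intro z hz hiz
      simp only [lrSet, mem_filter, mem_univ, true_and] at hz
      exact hz i hiz
    refine ⟨m, hmT, hmax, ?_⟩
    have hsub : insert j₁ {j₂} ⊆ Finset.univ.filter (fun j => i < j ∧ j ≤ m ∧ σ i < σ j) := by
      intro z hz
      simp only [Finset.mem_insert, Finset.mem_singleton] at hz
      rcases hz with rfl | rfl
      · simp only [mem_filter, mem_univ, true_and]
        exact ⟨hj₁.2, hj₁m, hval z hj₁.1 hj₁.2⟩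
      · simp only [mem_filter, mem_univ, true_and]
        exact ⟨hj₂.2, hj₂m, hval z hj₂.1 hj₂.2⟩
    calc 2 = (insert j₁ ({j₂} : Finset (Fin n))).card := by
              rw [Finset.card_insert_of_notMem (by simp [hne])]; simp
      _ ≤ _ := Finset.card_le_card hsub

lemma mmpKle_two_eq {n : ℕ} (σ : Equiv.Perm (Fin n)) :
    mmpKle 2 σ = (lrSet σ).card - 2 := by
  have : Finset.univ.filter (fun i => kleMatch 2 σ i)
      = (lrSet σ).filter (fun i => 2 ≤ ((lrSet σ).filter (fun j => i < j)).card) := by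
    ext i
    simp only [mem_filter, mem_univ, true_and, kleMatch_iff]
  rw [mmpKle, this, card_filter_le_above]

lemma mmpKle_two_eq_one_iff {n : ℕ} (σ : Equiv.Perm (Fin n)) :
    mmpKle 2 σ = 1 ↔ (lrSet σ).card = 3 := by
  rw [mmpKle_two_eq]; omega
/-- The set of elements that are the maximum of their cycle. -/
def cycMax {n : ℕ} (σ : Equiv.Perm (Fin n)) : Finset (Fin n) :=
  Finset.univ.filter (fun x => ∀ y, σ.SameCycle x y → y ≤ x)

lemma mem_cycMax {n : ℕ} (σ : Equiv.Perm (Fin n)) (x : Fin n) :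
    x ∈ cycMax σ ↔ ∀ y, σ.SameCycle x y → y ≤ x := by
  simp [cycMax]

lemma numCycles_eq_card_cycMax {n : ℕ} (σ : Equiv.Perm (Fin n)) :
    numCycles σ = (cycMax σ).card := by
  classical
  have hfix : (cycMax σ).filter (fun x => σ x = x) = Finset.univ.filter (fun x => σ x = x) := by
    ext x
    simp only [Finset.mem_filter, mem_cycMax, Finset.mem_univ, true_and]
    exact ⟨fun h => h.2, fun h => ⟨fun y hy => by rw [← hy.eq_of_left h], h⟩⟩
  have hne : ∀ c ∈ σ.cycleFactorsFinset, c.support.Nonempty := by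
    intro c hc
    exact (Equiv.Perm.mem_cycleFactorsFinset_iff.mp hc).1.nonempty_support
  have hcard1 : Multiset.card σ.cycleType = ((cycMax σ).filter (fun x => σ x ≠ x)).card := by
    rw [Equiv.Perm.cycleType_def, Multiset.card_map]
    show σ.cycleFactorsFinset.card = _
    apply Finset.card_bij (fun c hc => c.support.max' (hne c hc))
    · intro c hc
      have hmem : c.support.max' (hne c hc) ∈ c.support := Finset.max'_mem _ _
      have hsupp : c.support.max' (hne c hc) ∈ σ.support :=
        Equiv.Perm.mem_cycleFactorsFinset_support_le hc hmem
      have hcyc : c = σ.cycleOf (c.support.max' (hne c hc)) :=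
        Equiv.Perm.cycle_is_cycleOf hmem hc
      simp only [Finset.mem_filter, mem_cycMax]
      refine ⟨fun y hy => ?_, Equiv.Perm.mem_support.mp hsupp⟩
      have : y ∈ c.support := by
        rw [hcyc]
        exact Equiv.Perm.mem_support_cycleOf_iff.mpr ⟨hy, hsupp⟩
      exact Finset.le_max' _ _ this
    · intro c₁ hc₁ c₂ hc₂ h
      have h₁ : c₁ = σ.cycleOf (c₁.support.max' (hne c₁ hc₁)) :=
        Equiv.Perm.cycle_is_cycleOf (Finset.max'_mem _ _) hc₁
      have h₂ : c₂ = σ.cycleOf (c₂.support.max' (hne c₂ hc₂)) :=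
        Equiv.Perm.cycle_is_cycleOf (Finset.max'_mem _ _) hc₂
      rw [h₁, h₂, h]
    · intro x hx
      simp only [Finset.mem_filter, mem_cycMax] at hx
      obtain ⟨hmax, hxne⟩ := hx
      have hxsupp : x ∈ σ.support := Equiv.Perm.mem_support.mpr hxne
      have hcfac : σ.cycleOf x ∈ σ.cycleFactorsFinset :=
        Equiv.Perm.cycleOf_mem_cycleFactorsFinset_iff.mpr hxsupp
      refine ⟨σ.cycleOf x, hcfac, le_antisymm ?_ ?_⟩
      · apply hmax
        have := Finset.max'_mem _ (hne _ hcfac)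
        exact (Equiv.Perm.mem_support_cycleOf_iff.mp this).1
      · exact Finset.le_max' _ _ (Equiv.Perm.mem_support_cycleOf_iff.mpr ⟨Equiv.Perm.SameCycle.rfl, hxsupp⟩)
  have hsplit : ((cycMax σ).filter (fun x => σ x ≠ x)).card
      + ((cycMax σ).filter (fun x => σ x = x)).card = (cycMax σ).card := by
    rw [add_comm]
    exact Finset.card_filter_add_card_filter_not (fun x => σ x = x)
  rw [numCycles, hcard1, hfix.symm, hsplit]
/-- insert the value 0 at position `q` into the word of `e`. -/
def insPerm {n : ℕ} (q : Fin (n + 1)) (e : Equiv.Perm (Fin n)) : Equiv.Perm (Fin (n + 1)) :=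
  ((finSuccEquiv' q).trans e.optionCongr).trans (finSuccEquiv' 0).symm

lemma insPerm_at {n : ℕ} (q : Fin (n + 1)) (e : Equiv.Perm (Fin n)) : insPerm q e q = 0 := by
  simp [insPerm, finSuccEquiv'_at, finSuccEquiv'_symm_none]

lemma insPerm_succAbove {n : ℕ} (q : Fin (n + 1)) (e : Equiv.Perm (Fin n)) (x : Fin n) :
    insPerm q e (q.succAbove x) = (e x).succ := by
  simp [insPerm, finSuccEquiv'_succAbove, finSuccEquiv'_symm_some, Fin.zero_succAbove]

lemma insPerm_injective {n : ℕ} :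
    Function.Injective (fun p : Fin (n + 1) × Equiv.Perm (Fin n) => insPerm p.1 p.2) := by
  rintro ⟨q, e⟩ ⟨q', e'⟩ h
  simp only at h
  have hq : q = q' := by
    have h1 : insPerm q e q = 0 := insPerm_at q e
    have h2 : insPerm q e q' = 0 := by rw [h]; exact insPerm_at q' e'
    exact (insPerm q e).injective (h1.trans h2.symm)
  subst hq
  have he : e = e' := by
    ext x
    have := congrArg (fun f : Equiv.Perm (Fin (n+1)) => f (q.succAbove x)) h
    simp only [insPerm_succAbove] at this
    exact congrArg Fin.val (Fin.succ_injective _ this)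
  rw [he]

/-- the insertion bijection. -/
noncomputable def insEquiv (n : ℕ) : Fin (n + 1) × Equiv.Perm (Fin n) ≃ Equiv.Perm (Fin (n + 1)) :=
  Equiv.ofBijective _ ((Fintype.bijective_iff_injective_and_card _).mpr
    ⟨insPerm_injective, by simp [Fintype.card_perm, Nat.factorial_succ]⟩)

lemma insEquiv_apply {n : ℕ} (q : Fin (n + 1)) (e : Equiv.Perm (Fin n)) :
    insEquiv n (q, e) = insPerm q e := rfl

lemma lrSet_insPerm_at {n : ℕ} (q : Fin (n + 1)) (e : Equiv.Perm (Fin n)) :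
    q ∈ lrSet (insPerm q e) ↔ q = 0 := by
  simp only [lrSet, Finset.mem_filter, Finset.mem_univ, true_and]
  constructor
  · intro h
    by_contra hq
    obtain ⟨z, hz⟩ := Fin.exists_succAbove_eq (Ne.symm hq)
    have h0 : (0 : Fin (n+1)) < q := Fin.pos_of_ne_zero hq
    have hv : insPerm q e 0 = (e z).succ := by rw [← hz]; exact insPerm_succAbove q e z
    have := h 0 h0
    rw [hv, insPerm_at] at this
    exact absurd this (Fin.not_lt_zero _)
  · rintro rfl
    intro j hj
    exact absurd hj (Fin.not_lt_zero _)

lemma lrSet_insPerm_succAbove {n : ℕ} (q : Fin (n + 1)) (e : Equiv.Perm (Fin n)) (x : Fin n) :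
    q.succAbove x ∈ lrSet (insPerm q e) ↔ x ∈ lrSet e := by
  simp only [lrSet, Finset.mem_filter, Finset.mem_univ, true_and]
  constructor
  · intro h y hy
    have := h (q.succAbove y) (Fin.succAbove_lt_succAbove_iff.mpr hy)
    rw [insPerm_succAbove, insPerm_succAbove] at this
    exact Fin.succ_lt_succ_iff.mp this
  · intro h j hj
    rcases eq_or_ne j q with rfl | hne
    · rw [insPerm_at, insPerm_succAbove]
      exact Fin.succ_pos _
    · obtain ⟨z, hz⟩ := Fin.exists_succAbove_eq hne
      rw [← hz] at hj ⊢
      rw [insPerm_succAbove, insPerm_succAbove]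
      exact Fin.succ_lt_succ_iff.mpr (h z (Fin.succAbove_lt_succAbove_iff.mp hj))

lemma card_eq_sum_ite_mem {m : ℕ} (S : Finset (Fin m)) :
    S.card = ∑ j : Fin m, if j ∈ S then 1 else 0 := by
  rw [Finset.sum_ite_mem, Finset.univ_inter, Finset.card_eq_sum_ones]

lemma lrSet_insPerm_card {n : ℕ} (q : Fin (n + 1)) (e : Equiv.Perm (Fin n)) :
    (lrSet (insPerm q e)).card = (if q = 0 then 1 else 0) + (lrSet e).card := by
  rw [card_eq_sum_ite_mem, Fin.sum_univ_succAbove _ q]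
  congr 1
  · simp only [lrSet_insPerm_at]
  · rw [card_eq_sum_ite_mem]
    exact Finset.sum_congr rfl (fun x _ => by simp only [lrSet_insPerm_succAbove])
section CycleSide

open Equiv Equiv.Perm

variable {n : ℕ}

lemma dz_apply_succ (e : Perm (Fin n)) (x : Fin n) :
    (Equiv.Perm.decomposeFin.symm (0, e)) x.succ = (e x).succ := by
  rw [Equiv.Perm.decomposeFin_symm_apply_succ, Equiv.swap_self]
  rfl

lemma dz_pow (e : Perm (Fin n)) (i : ℕ) (x : Fin n) :
    ((Equiv.Perm.decomposeFin.symm (0, e)) ^ i) x.succ = ((e ^ i) x).succ := by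
  induction i generalizing x with
  | zero => simp
  | succ i ih =>
    rw [pow_succ', pow_succ', Perm.mul_apply, Perm.mul_apply, ih, dz_apply_succ]

lemma sameCycle_dz (e : Perm (Fin n)) (x y : Fin n) :
    (Equiv.Perm.decomposeFin.symm (0, e)).SameCycle x.succ y.succ ↔ e.SameCycle x y := by
  constructor
  · intro h
    obtain ⟨i, _, hi⟩ := h.exists_pow_eq'
    rw [dz_pow] at hi
    exact ⟨(i : ℤ), by rw [zpow_natCast]; exact Fin.succ_injective _ hi⟩
  · intro h
    obtain ⟨i, _, hi⟩ := h.exists_pow_eq'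
    exact ⟨(i : ℤ), by rw [zpow_natCast, dz_pow, hi]⟩

lemma s1 (p : Fin (n + 1)) (e : Perm (Fin n)) (x : Fin n) :
    (Equiv.Perm.decomposeFin.symm (p, e)).SameCycle x.succ (e x).succ := by
  set τ := Equiv.Perm.decomposeFin.symm (p, e) with hτ
  by_cases h : (e x).succ = p
  · have h1 : τ x.succ = 0 := by
      rw [hτ, Equiv.Perm.decomposeFin_symm_apply_succ, h, Equiv.swap_apply_right]
    have h2 : τ 0 = (e x).succ := by
      rw [hτ, Equiv.Perm.decomposeFin_symm_apply_zero, h]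
    exact Equiv.Perm.SameCycle.trans ⟨1, by rw [zpow_one, h1]⟩ ⟨1, by rw [zpow_one, h2]⟩
  · have h1 : τ x.succ = (e x).succ := by
      rw [hτ, Equiv.Perm.decomposeFin_symm_apply_succ,
        Equiv.swap_apply_of_ne_of_ne (Fin.succ_ne_zero _) h]
    exact ⟨1, by rw [zpow_one, h1]⟩

lemma s2 (p : Fin (n + 1)) (e : Perm (Fin n)) {x y : Fin n} (h : e.SameCycle x y) :
    (Equiv.Perm.decomposeFin.symm (p, e)).SameCycle x.succ y.succ := by
  have key : ∀ (i : ℕ) (x : Fin n),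
      (Equiv.Perm.decomposeFin.symm (p, e)).SameCycle x.succ (((e ^ i) x).succ) := by
    intro i
    induction i with
    | zero => intro x; simpa using Equiv.Perm.SameCycle.refl _ _
    | succ i ih =>
      intro x
      rw [pow_succ]
      exact Equiv.Perm.SameCycle.trans (s1 p e x) (by simpa [Perm.mul_apply] using ih (e x))
  obtain ⟨i, _, hi⟩ := h.exists_pow_eq'
  subst hi
  exact key i x

lemma fcase_eq_pred {p : Fin (n + 1)} (hp : p ≠ 0) (a : Fin (n + 1)) (h : a ≠ 0) :
    (Fin.cases (p.pred hp) id a : Fin n) = a.pred h := by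
  induction a using Fin.cases with
  | zero => exact absurd rfl h
  | succ z => simp [Fin.pred_succ]

lemma s3 {p : Fin (n + 1)} (hp : p ≠ 0) (e : Perm (Fin n)) {a b : Fin (n + 1)}
    (h : (Equiv.Perm.decomposeFin.symm (p, e)).SameCycle a b) :
    e.SameCycle (Fin.cases (p.pred hp) id a) (Fin.cases (p.pred hp) id b) := by
  set τ := Equiv.Perm.decomposeFin.symm (p, e) with hτ
  set F : Fin (n + 1) → Fin n := Fin.cases (p.pred hp) id with hF
  have step : ∀ a, e.SameCycle (F a) (F (τ a)) := by
    intro a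
    induction a using Fin.cases with
    | zero =>
      have : τ 0 = p := Equiv.Perm.decomposeFin_symm_apply_zero p e
      rw [this]
      have hFp : F p = p.pred hp := fcase_eq_pred hp p hp
      rw [hFp]
      exact Equiv.Perm.SameCycle.refl _ _
    | succ x =>
      by_cases hc : (e x).succ = p
      · have h1 : τ x.succ = 0 := by
          rw [hτ, Equiv.Perm.decomposeFin_symm_apply_succ, hc, Equiv.swap_apply_right]
        rw [h1]
        have h2 : F 0 = p.pred hp := rfl
        have h3 : p.pred hp = e x := by
          apply Fin.succ_injective
          rw [Fin.succ_pred]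
          exact hc.symm
        simp only [hF, Fin.cases_succ, Fin.cases_zero, h3, id_eq]
        exact ⟨1, by rw [zpow_one]⟩
      · have h1 : τ x.succ = (e x).succ := by
          rw [hτ, Equiv.Perm.decomposeFin_symm_apply_succ,
            Equiv.swap_apply_of_ne_of_ne (Fin.succ_ne_zero _) hc]
        rw [h1]
        simp only [hF, Fin.cases_succ, id_eq]
        exact ⟨1, by rw [zpow_one]⟩
  have key : ∀ (i : ℕ) (a : Fin (n + 1)), e.SameCycle (F a) (F ((τ ^ i) a)) := by
    intro i
    induction i with
    | zero => intro a; simpa using Equiv.Perm.SameCycle.refl _ _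
    | succ i ih =>
      intro a
      rw [pow_succ]
      exact Equiv.Perm.SameCycle.trans (step a) (by simpa [Perm.mul_apply] using ih (τ a))
  obtain ⟨i, _, hi⟩ := h.exists_pow_eq'
  subst hi
  exact key i a

lemma cycMax_decomposeFin_zero_mem (p : Fin (n + 1)) (e : Perm (Fin n)) :
    (0 : Fin (n + 1)) ∈ cycMax (Equiv.Perm.decomposeFin.symm (p, e)) ↔ p = 0 := by
  rw [mem_cycMax]
  constructor
  · intro h
    have hsc : (Equiv.Perm.decomposeFin.symm (p, e)).SameCycle 0 p :=
      ⟨1, by rw [zpow_one, Equiv.Perm.decomposeFin_symm_apply_zero]⟩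
    exact Fin.le_zero_iff.mp (h p hsc)
  · rintro rfl y hy
    have hfix : Function.IsFixedPt (Equiv.Perm.decomposeFin.symm ((0 : Fin (n+1)), e)) 0 :=
      Equiv.Perm.decomposeFin_symm_apply_zero 0 e
    rw [← hy.eq_of_left hfix]

lemma cycMax_decomposeFin_succ_mem (p : Fin (n + 1)) (e : Perm (Fin n)) (x : Fin n) :
    x.succ ∈ cycMax (Equiv.Perm.decomposeFin.symm (p, e)) ↔ x ∈ cycMax e := by
  rw [mem_cycMax, mem_cycMax]
  constructor
  · intro h z hz
    exact Fin.succ_le_succ_iff.mp (h z.succ (s2 p e hz))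
  · intro h y hy
    rcases eq_or_ne y 0 with rfl | hy0
    · exact Fin.zero_le _
    · rcases eq_or_ne p 0 with rfl | hp
      · have := (sameCycle_dz e x (y.pred hy0)).mp (by rwa [Fin.succ_pred])
        rw [← Fin.succ_pred y hy0]
        exact Fin.succ_le_succ_iff.mpr (h _ this)
      · have h3 := s3 hp e hy
        simp only [Fin.cases_succ] at h3
        have hFy : (Fin.cases (p.pred hp) id y : Fin n) = y.pred hy0 :=
          fcase_eq_pred hp y hy0
        rw [hFy] at h3
        rw [← Fin.succ_pred y hy0]
        exact Fin.succ_le_succ_iff.mpr (h _ h3)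

lemma cycMax_decomposeFin_card (p : Fin (n + 1)) (e : Perm (Fin n)) :
    (cycMax (Equiv.Perm.decomposeFin.symm (p, e))).card
      = (if p = 0 then 1 else 0) + (cycMax e).card := by
  rw [card_eq_sum_ite_mem, Fin.sum_univ_succ]
  congr 1
  · simp only [cycMax_decomposeFin_zero_mem]
  · rw [card_eq_sum_ite_mem]
    exact Finset.sum_congr rfl (fun x _ => by simp only [cycMax_decomposeFin_succ_mem])

end CycleSide
lemma card_filter_equiv {α β : Type*} [Fintype α] [Fintype β] [DecidableEq α] [DecidableEq β]
    (E : α ≃ β) (P : β → Prop) [DecidablePred P] :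
    (Finset.univ.filter (fun b => P b)).card
      = (Finset.univ.filter (fun a => P (E a))).card := by
  classical
  rw [← Fintype.card_subtype, ← Fintype.card_subtype]
  exact (Fintype.card_congr (E.subtypeEquiv (fun a => Iff.rfl))).symm

lemma equidistrib : ∀ (n k : ℕ),
    (Finset.univ.filter (fun σ : Equiv.Perm (Fin n) => (lrSet σ).card = k)).card
      = (Finset.univ.filter (fun σ : Equiv.Perm (Fin n) => (cycMax σ).card = k)).card := by
  intro n
  induction n with
  | zero =>
    intro k
    have h : ∀ σ : Equiv.Perm (Fin 0), (lrSet σ).card = (cycMax σ).card := fun σ => by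
      rw [Finset.eq_empty_of_isEmpty (lrSet σ), Finset.eq_empty_of_isEmpty (cycMax σ)]
    rw [Finset.filter_congr (fun σ _ => by rw [h σ] : ∀ σ ∈ Finset.univ,
      ((lrSet σ).card = k) ↔ ((cycMax σ).card = k))]
  | succ n ih =>
    intro k
    rw [card_filter_equiv (insEquiv n) (fun σ => (lrSet σ).card = k)]
    rw [card_filter_equiv (Equiv.Perm.decomposeFin.symm :
        Fin (n + 1) × Equiv.Perm (Fin n) ≃ Equiv.Perm (Fin (n + 1)))
        (fun σ => (cycMax σ).card = k)]
    have hL : ∀ qe : Fin (n + 1) × Equiv.Perm (Fin n),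
        (lrSet (insEquiv n qe)).card = (if qe.1 = 0 then 1 else 0) + (lrSet qe.2).card := by
      rintro ⟨q, e⟩
      exact lrSet_insPerm_card q e
    have hC : ∀ qe : Fin (n + 1) × Equiv.Perm (Fin n),
        (cycMax (Equiv.Perm.decomposeFin.symm qe)).card
          = (if qe.1 = 0 then 1 else 0) + (cycMax qe.2).card := by
      rintro ⟨q, e⟩
      exact cycMax_decomposeFin_card q e
    rw [Finset.filter_congr (fun qe _ => by rw [hL qe] : ∀ qe ∈ Finset.univ,
      ((lrSet (insEquiv n qe)).card = k)
        ↔ ((if qe.1 = 0 then 1 else 0) + (lrSet qe.2).card = k))]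
    rw [Finset.filter_congr (fun qe _ => by rw [hC qe] : ∀ qe ∈ Finset.univ,
      ((cycMax (Equiv.Perm.decomposeFin.symm qe)).card = k)
        ↔ ((if qe.1 = 0 then 1 else 0) + (cycMax qe.2).card = k))]
    rw [Finset.card_filter, Finset.card_filter, Fintype.sum_prod_type, Fintype.sum_prod_type]
    apply Finset.sum_congr rfl
    intro q _
    rw [← Finset.card_filter, ← Finset.card_filter]
    set c := (if q = 0 then 1 else 0) with hc
    by_cases hck : c ≤ k
    · rw [Finset.filter_congr (fun e _ => by constructor <;> intro h <;> omega :
        ∀ e ∈ Finset.univ, (c + (lrSet e).card = k) ↔ ((lrSet e).card = k - c))]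
      rw [Finset.filter_congr (fun e _ => by constructor <;> intro h <;> omega :
        ∀ e ∈ Finset.univ, (c + (cycMax e).card = k) ↔ ((cycMax e).card = k - c))]
      exact ih (k - c)
    · rw [Finset.filter_false_of_mem (fun e _ => by omega :
        ∀ e ∈ Finset.univ, ¬(c + (lrSet e).card = k))]
      rw [Finset.filter_false_of_mem (fun e _ => by omega :
        ∀ e ∈ Finset.univ, ¬(c + (cycMax e).card = k))]

theorem stmt_12 (n : ℕ) (hn : 3 ≤ n) :
    (Finset.univ.filter (fun σ : Equiv.Perm (Fin n) => mmpKle 2 σ = 1)).card =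
      (Finset.univ.filter (fun σ : Equiv.Perm (Fin n) => numCycles σ = 3)).card ∧
    (RKle 2 n).coeff 1 =
      ((Finset.univ.filter (fun σ : Equiv.Perm (Fin n) => numCycles σ = 3)).card : ℤ) := by
  have h1 : Finset.univ.filter (fun σ : Equiv.Perm (Fin n) => mmpKle 2 σ = 1)
      = Finset.univ.filter (fun σ => (lrSet σ).card = 3) :=
    Finset.filter_congr (fun σ _ => mmpKle_two_eq_one_iff σ)
  have h2 : Finset.univ.filter (fun σ : Equiv.Perm (Fin n) => numCycles σ = 3)
      = Finset.univ.filter (fun σ => (cycMax σ).card = 3) :=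
    Finset.filter_congr (fun σ _ => by rw [numCycles_eq_card_cycMax])
  have key : (Finset.univ.filter (fun σ : Equiv.Perm (Fin n) => mmpKle 2 σ = 1)).card =
      (Finset.univ.filter (fun σ : Equiv.Perm (Fin n) => numCycles σ = 3)).card := by
    rw [h1, h2]
    exact equidistrib n 3
  refine ⟨key, ?_⟩
  have hcoeff : (RKle 2 n).coeff 1
      = ((Finset.univ.filter (fun σ : Equiv.Perm (Fin n) => mmpKle 2 σ = 1)).card : ℤ) := by
    rw [RKle, Polynomial.finset_sum_coeff]
    simp only [Polynomial.coeff_X_pow]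
    have he : ∀ σ : Equiv.Perm (Fin n), ((1 : ℕ) = mmpKle 2 σ) ↔ (mmpKle 2 σ = 1) :=
      fun σ => eq_comm
    simp only [he]
    rw [Finset.sum_boole]
  rw [hcoeff]
  exact_mod_cast congrArg (Nat.cast : ℕ → ℤ) key
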